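/- Let ρ be a complex-valued Schwartz function on ℝ and let μ be a Borel probability measure on ℝ with compact support (there is a compact K with μ(Kᶜ) = 0). For n ∈ ℕ and t ∈ ℝ define G_n(t) : ℝ → ℂ by G_n(t)(x) := ∫ (-a)^n • (iteratedDeriv n ρ)(x - t*a) ∂μ(a). Then: (i) G_n(t) is integrable on ℝ for every n and t; (ii) for every n and every t₀ ∈ ℝ, the curve t ↦ [G_n(t)] into L¹(ℝ, ℂ) is differentiable at t₀ (HasDerivAt in the Banach space Lp ℂ 1 volume) with derivative [G_{n+1}(t₀)]; (iii) G_n(0)(x) = (∫ a^n ∂μ(a)) • (-1)^n • (iteratedDeriv n ρ)(x) for all x. Consequently the map t ↦ [G_0(t)] is infinitely strongly differentiable in L¹ and its n-th derivative at t = 0 equals the n-th moment of μ times (-1)^n times the n-th derivative of ρ. -/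

import Mathlib

open MeasureTheory
open scoped ENNReal

/-- `Gfun ρ μ n t x = ∫ (-a)^n • (iteratedDeriv n ρ) (x - t*a) ∂μ(a)`, the density
of `((-D)^n ν_in) ∗ (x^n ⊙ μ)_t` for a Schwartz input density `ρ`. -/
noncomputable def Gfun (ρ : SchwartzMap ℝ ℂ) (μ : Measure ℝ) (n : ℕ) (t : ℝ) : ℝ → ℂ :=
  fun x => ∫ a, ((-a) ^ n : ℝ) • iteratedDeriv n (ρ : ℝ → ℂ) (x - t * a) ∂μ


noncomputable def schwIt (ρ : SchwartzMap ℝ ℂ) : ℕ → SchwartzMap ℝ ℂ :=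
  fun n => (SchwartzMap.derivCLM ℝ ℂ)^[n] ρ

lemma schwIt_coe (ρ : SchwartzMap ℝ ℂ) (n : ℕ) :
    ⇑(schwIt ρ n) = iteratedDeriv n (⇑ρ) := by
  induction n with
  | zero => simp [schwIt, iteratedDeriv_zero]
  | succ n ih =>
    funext x
    rw [iteratedDeriv_succ, ← ih]
    show ((SchwartzMap.derivCLM ℝ ℂ)^[n+1] ρ) x = _
    rw [Function.iterate_succ_apply']
    exact SchwartzMap.derivCLM_apply ℝ (F := ℂ) _ x

lemma iter_integrable (ρ : SchwartzMap ℝ ℂ) (n : ℕ) :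
    Integrable (iteratedDeriv n (⇑ρ)) volume := by
  rw [← schwIt_coe]; exact (schwIt ρ n).integrable

lemma iter_continuous (ρ : SchwartzMap ℝ ℂ) (n : ℕ) :
    Continuous (iteratedDeriv n (⇑ρ)) := by
  rw [← schwIt_coe]; exact (schwIt ρ n).continuous

lemma iter_bound (ρ : SchwartzMap ℝ ℂ) (n : ℕ) (x : ℝ) :
    ‖iteratedDeriv n (⇑ρ) x‖ ≤ (SchwartzMap.seminorm ℝ 0 0) (schwIt ρ n) := by
  rw [← schwIt_coe]; exact SchwartzMap.norm_le_seminorm ℝ _ x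

lemma iter_hasDerivAt (ρ : SchwartzMap ℝ ℂ) (n : ℕ) (x : ℝ) :
    HasDerivAt (iteratedDeriv n (⇑ρ)) (iteratedDeriv (n+1) (⇑ρ) x) x := by
  have h1 : DifferentiableAt ℝ (iteratedDeriv n (⇑ρ)) x := by
    rw [← schwIt_coe]; exact (schwIt ρ n).differentiableAt
  have := h1.hasDerivAt
  rwa [iteratedDeriv_succ]

lemma taylorD (ρ : SchwartzMap ℝ ℂ) (n : ℕ) (a x t t₀ : ℝ) :
    iteratedDeriv n (⇑ρ) (x - t*a) - iteratedDeriv n (⇑ρ) (x - t₀*a)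
      + ((t - t₀) * a) • iteratedDeriv (n+1) (⇑ρ) (x - t₀*a)
    = ∫ s in t₀..t, ((t - s) * a^2 : ℝ) • iteratedDeriv (n+2) (⇑ρ) (x - s*a) := by
  have key : ∀ s ∈ Set.uIcc t₀ t,
      HasDerivAt (fun s : ℝ =>
          iteratedDeriv n (⇑ρ) (x - s*a) + (t - s) • ((-a) • iteratedDeriv (n+1) (⇑ρ) (x - s*a)))
        (((t - s) * a^2 : ℝ) • iteratedDeriv (n+2) (⇑ρ) (x - s*a)) s := by
    intro s _
    have hin : HasDerivAt (fun s : ℝ => x - s * a) (-a) s := by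
      simpa using (hasDerivAt_mul_const a).const_sub x
    have hg0 : HasDerivAt (fun s : ℝ => iteratedDeriv n (⇑ρ) (x - s*a))
        ((-a) • iteratedDeriv (n+1) (⇑ρ) (x - s*a)) s :=
      by have := (iter_hasDerivAt ρ n (x - s*a)).scomp s hin; exact this
    have hg1 : HasDerivAt (fun s : ℝ => iteratedDeriv (n+1) (⇑ρ) (x - s*a))
        ((-a) • iteratedDeriv (n+2) (⇑ρ) (x - s*a)) s :=
      by have := (iter_hasDerivAt ρ (n+1) (x - s*a)).scomp s hin; exact this
    have hc : HasDerivAt (fun s : ℝ => t - s) (-1) s := by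
      simpa using (hasDerivAt_id s).const_sub t
    have h2 := hc.smul (hg1.const_smul (-a))
    have h3 := hg0.add h2
    refine h3.congr_deriv ?_
    simp only [smul_smul, Pi.smul_apply]
    module
  have hInt : IntervalIntegrable
      (fun s : ℝ => ((t - s) * a^2 : ℝ) • iteratedDeriv (n+2) (⇑ρ) (x - s*a)) volume t₀ t := by
    apply Continuous.intervalIntegrable
    exact ((continuous_const.sub continuous_id).mul continuous_const).smul
      ((iter_continuous ρ (n+2)).comp (continuous_const.sub (continuous_id.mul continuous_const)))
  have := intervalIntegral.integral_eq_sub_of_hasDerivAt key hInt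
  rw [this]
  simp only [sub_self, zero_smul, add_zero]
  module

lemma ae_abs_le (μ : Measure ℝ) {K : Set ℝ} {R : ℝ} (hKc : μ Kᶜ = 0)
    (hKR : ∀ a ∈ K, |a| ≤ R) : ∀ᵐ a ∂μ, |a| ≤ R := by
  have h : ∀ᵐ a ∂μ, a ∈ K := by
    rw [MeasureTheory.ae_iff]
    simpa [Set.compl_def] using hKc
  exact h.mono fun a ha => hKR a ha

lemma Gfun_integrable (ρ : SchwartzMap ℝ ℂ) (μ : Measure ℝ) [IsProbabilityMeasure μ]
    {K : Set ℝ} {R : ℝ} (hKc : μ Kᶜ = 0) (hKR : ∀ a ∈ K, |a| ≤ R) (hR0 : 0 ≤ R)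
    (n : ℕ) (t : ℝ) : Integrable (Gfun ρ μ n t) volume := by
  have haR := ae_abs_le μ hKc hKR
  have hFc : Continuous fun p : ℝ × ℝ => ((-p.1) ^ n : ℝ) • iteratedDeriv n (⇑ρ) (p.2 - t * p.1) :=
    (continuous_fst.neg.pow n).smul
      ((iter_continuous ρ n).comp (continuous_snd.sub (continuous_const.mul continuous_fst)))
  have hprod : Integrable (fun p : ℝ × ℝ => ((-p.1) ^ n : ℝ) • iteratedDeriv n (⇑ρ) (p.2 - t * p.1))
      (μ.prod volume) := by
    rw [MeasureTheory.integrable_prod_iff hFc.aestronglyMeasurable]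
    constructor
    · refine Filter.Eventually.of_forall fun a => ?_
      exact ((iter_integrable ρ n).comp_sub_right (t*a)).smul (((-a)^n : ℝ))
    · have heq : (fun a : ℝ => ∫ x, ‖((-a) ^ n : ℝ) • iteratedDeriv n (⇑ρ) (x - t * a)‖)
          = fun a : ℝ => |a|^n * ∫ x, ‖iteratedDeriv n (⇑ρ) x‖ := by
        funext a
        simp_rw [norm_smul, Real.norm_eq_abs, abs_pow, abs_neg]
        rw [MeasureTheory.integral_const_mul]
        congr 1
        exact integral_sub_right_eq_self (fun x => ‖iteratedDeriv n (⇑ρ) x‖) (t*a)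
      rw [heq]
      apply Integrable.mono' (integrable_const (R^n * ∫ x, ‖iteratedDeriv n (⇑ρ) x‖))
      · exact ((continuous_abs.pow n).mul continuous_const).aestronglyMeasurable
      · filter_upwards [haR] with a ha
        rw [Real.norm_eq_abs]
        have h1 : |a|^n ≤ R^n := pow_le_pow_left₀ (abs_nonneg a) ha n
        have h2 : (0:ℝ) ≤ ∫ x, ‖iteratedDeriv n (⇑ρ) x‖ := integral_nonneg fun _ => norm_nonneg _
        rw [abs_of_nonneg (by positivity)]
        exact mul_le_mul_of_nonneg_right h1 h2
  exact hprod.integral_prod_right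

lemma Gfun_zero (ρ : SchwartzMap ℝ ℂ) (μ : Measure ℝ) (n : ℕ) (x : ℝ) :
    Gfun ρ μ n 0 x = (∫ a, a ^ n ∂μ) • ((-1 : ℂ) ^ n • iteratedDeriv n (⇑ρ) x) := by
  unfold Gfun
  simp only [zero_mul, sub_zero]
  rw [integral_smul_const]
  have h1 : ∫ a, ((-a) ^ n : ℝ) ∂μ = (-1 : ℝ)^n * ∫ a, a ^ n ∂μ := by
    rw [show (fun a : ℝ => ((-a)^n : ℝ)) = fun a : ℝ => (-1:ℝ)^n * a^n from
      funext fun a => by rw [neg_pow]]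
    exact MeasureTheory.integral_const_mul _ _
  rw [h1, mul_smul, smul_comm]
  congr 1
  rw [Complex.real_smul, smul_eq_mul]
  push_cast
  ring

lemma key_est (ρ : SchwartzMap ℝ ℂ) (μ : Measure ℝ) [IsProbabilityMeasure μ]
    {K : Set ℝ} {R : ℝ} (hKc : μ Kᶜ = 0) (hKR : ∀ a ∈ K, |a| ≤ R) (hR0 : 0 ≤ R)
    (n : ℕ) (t₀ t : ℝ) :
    ∫ x, ‖Gfun ρ μ n t x - Gfun ρ μ n t₀ x - (t - t₀) • Gfun ρ μ (n+1) t₀ x‖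
      ≤ (R^(n+2) * ∫ y, ‖iteratedDeriv (n+2) (⇑ρ) y‖) * (t - t₀)^2 := by
  have haR := ae_abs_le μ hKc hKR
  set C : ℝ := ∫ y, ‖iteratedDeriv (n+2) (⇑ρ) y‖ with hCdef
  have hC0 : 0 ≤ C := integral_nonneg fun _ => norm_nonneg _
  set Cl : ℝ≥0∞ := ∫⁻ y, ‖iteratedDeriv (n+2) (⇑ρ) y‖₊ ∂volume with hCldef
  have hClof : ENNReal.ofReal C = Cl :=
    ofReal_integral_norm_eq_lintegral_enorm (iter_integrable ρ (n+2))
  -- the Taylor remainder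
  set D : ℝ → ℝ → ℂ := fun a x =>
    iteratedDeriv n (⇑ρ) (x - t*a) - iteratedDeriv n (⇑ρ) (x - t₀*a)
      + ((t - t₀) * a) • iteratedDeriv (n+1) (⇑ρ) (x - t₀*a) with hDdef
  -- integrability in a for fixed x
  have hμint : ∀ (m : ℕ) (s x : ℝ),
      Integrable (fun a => ((-a)^m : ℝ) • iteratedDeriv m (⇑ρ) (x - s*a)) μ := by
    intro m s x
    apply Integrable.mono' (integrable_const (R^m * (SchwartzMap.seminorm ℝ 0 0) (schwIt ρ m)))
    · exact ((continuous_id.neg.pow m).smul ((iter_continuous ρ m).comp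
        (continuous_const.sub (continuous_const.mul continuous_id)))).aestronglyMeasurable
    · filter_upwards [haR] with a ha
      rw [norm_smul, Real.norm_eq_abs, abs_pow, abs_neg]
      exact mul_le_mul (pow_le_pow_left₀ (abs_nonneg a) ha m) (iter_bound ρ m _)
        (norm_nonneg _) (by positivity)
  -- pointwise identity for the difference
  have hΔ : ∀ x, Gfun ρ μ n t x - Gfun ρ μ n t₀ x - (t - t₀) • Gfun ρ μ (n+1) t₀ x
      = ∫ a, ((-a)^n : ℝ) • D a x ∂μ := by
    intro x
    unfold Gfun
    have e1 : (fun a : ℝ => ((-a)^n : ℝ) • D a x) = fun a : ℝ =>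
        (((-a)^n : ℝ) • iteratedDeriv n (⇑ρ) (x - t*a)
          - ((-a)^n : ℝ) • iteratedDeriv n (⇑ρ) (x - t₀*a))
          - (t - t₀) • (((-a)^(n+1) : ℝ) • iteratedDeriv (n+1) (⇑ρ) (x - t₀*a)) :=
      funext fun a => by simp only [hDdef, pow_succ]; module
    rw [e1, eq_comm]
    rw [integral_sub ?h1 ?h2]
    case h1 => exact (hμint n t x).sub (hμint n t₀ x)
    case h2 => exact (hμint (n+1) t₀ x).smul (t - t₀)
    rw [integral_sub (hμint n t x) (hμint n t₀ x), integral_smul]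
  -- joint continuity
  have hDcont : Continuous fun p : ℝ × ℝ => ((-p.2)^n : ℝ) • D p.2 p.1 := by
    simp only [hDdef]
    apply (continuous_snd.neg.pow n).smul
    exact (((iter_continuous ρ n).comp
        (continuous_fst.sub (continuous_const.mul continuous_snd))).sub
      ((iter_continuous ρ n).comp
        (continuous_fst.sub (continuous_const.mul continuous_snd)))).add
      ((continuous_const.mul continuous_snd).smul ((iter_continuous ρ (n+1)).comp
        (continuous_fst.sub (continuous_const.mul continuous_snd))))
  have hΔint : Integrable (fun x =>
      Gfun ρ μ n t x - Gfun ρ μ n t₀ x - (t - t₀) • Gfun ρ μ (n+1) t₀ x) volume :=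
    ((Gfun_integrable ρ μ hKc hKR hR0 n t).sub (Gfun_integrable ρ μ hKc hKR hR0 n t₀)).sub
      ((Gfun_integrable ρ μ hKc hKR hR0 (n+1) t₀).smul (t - t₀))
  -- the per-`a` inner estimate
  have hJa : ∀ a : ℝ, (∫⁻ x, ‖D a x‖₊ ∂volume)
      ≤ ENNReal.ofReal (|t - t₀| * a^2) * Cl * ENNReal.ofReal |t - t₀| := by
    intro a
    have hgc : Continuous fun p : ℝ × ℝ =>
        ((t - p.2) * a^2 : ℝ) • iteratedDeriv (n+2) (⇑ρ) (p.1 - p.2*a) :=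
      ((continuous_const.sub continuous_snd).mul continuous_const).smul
        ((iter_continuous ρ (n+2)).comp (continuous_fst.sub (continuous_snd.mul continuous_const)))
    have hptw : ∀ x : ℝ, (‖D a x‖₊ : ℝ≥0∞)
        ≤ ∫⁻ s in Set.uIoc t₀ t,
            ‖((t - s) * a^2 : ℝ) • iteratedDeriv (n+2) (⇑ρ) (x - s*a)‖₊ ∂volume := by
      intro x
      have hD2 : D a x
          = ∫ s in t₀..t, ((t - s) * a^2 : ℝ) • iteratedDeriv (n+2) (⇑ρ) (x - s*a) := by
        simp only [hDdef]; exact taylorD ρ n a x t t₀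
      have hgi : IntegrableOn
          (fun s : ℝ => ((t - s) * a^2 : ℝ) • iteratedDeriv (n+2) (⇑ρ) (x - s*a))
          (Set.uIoc t₀ t) volume := by
        apply Continuous.integrableOn_uIoc
        exact ((continuous_const.sub continuous_id).mul continuous_const).smul
          ((iter_continuous ρ (n+2)).comp (continuous_const.sub (continuous_id.mul continuous_const)))
      simp only [← enorm_eq_nnnorm]
      rw [hD2, ← ofReal_norm, ← ofReal_integral_norm_eq_lintegral_enorm hgi]
      exact ENNReal.ofReal_le_ofReal intervalIntegral.norm_integral_le_integral_norm_uIoc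
    have hinner : ∀ s : ℝ,
        (∫⁻ x, ‖((t - s) * a^2 : ℝ) • iteratedDeriv (n+2) (⇑ρ) (x - s*a)‖₊ ∂volume)
          = ENNReal.ofReal (|t - s| * a^2) * Cl := by
      intro s
      simp_rw [nnnorm_smul, ENNReal.coe_mul]
      rw [lintegral_const_mul' _ _ ENNReal.coe_ne_top,
        lintegral_sub_right_eq_self (fun y => (‖iteratedDeriv (n+2) (⇑ρ) y‖₊ : ℝ≥0∞)) (s*a),
        show ((‖((t - s) * a^2 : ℝ)‖₊ : ℝ≥0∞)) = ENNReal.ofReal |(t - s) * a^2| from Real.enorm_eq_ofReal_abs _, abs_mul]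
      rw [abs_of_nonneg (sq_nonneg a)]
    have habs : ∀ s ∈ Set.uIoc t₀ t, |t - s| ≤ |t - t₀| := by
      intro s hs
      have h1 : min t₀ t < s := hs.1
      have h2 : s ≤ max t₀ t := hs.2
      have h3 : max t₀ t - min t₀ t = |t - t₀| := by
        rw [max_sub_min_eq_abs, abs_sub_comm]
      have m1 : min t₀ t ≤ t := min_le_right _ _
      have m2 : t ≤ max t₀ t := le_max_right _ _
      rw [abs_sub_le_iff]
      constructor <;> linarith
    calc (∫⁻ x, ‖D a x‖₊ ∂volume)
        ≤ ∫⁻ x, ∫⁻ s in Set.uIoc t₀ t,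
            ‖((t - s) * a^2 : ℝ) • iteratedDeriv (n+2) (⇑ρ) (x - s*a)‖₊ ∂volume ∂volume :=
          lintegral_mono hptw
      _ = ∫⁻ s in Set.uIoc t₀ t, ∫⁻ x,
            ‖((t - s) * a^2 : ℝ) • iteratedDeriv (n+2) (⇑ρ) (x - s*a)‖₊ ∂volume ∂volume :=
          lintegral_lintegral_swap (hgc.measurable.nnnorm.coe_nnreal_ennreal.aemeasurable)
      _ = ∫⁻ s in Set.uIoc t₀ t, ENNReal.ofReal (|t - s| * a^2) * Cl ∂volume :=
          lintegral_congr fun s => hinner s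
      _ ≤ ∫⁻ _ in Set.uIoc t₀ t, ENNReal.ofReal (|t - t₀| * a^2) * Cl ∂volume := by
          refine setLIntegral_mono measurable_const fun s hs => ?_
          exact mul_le_mul_left
            (ENNReal.ofReal_le_ofReal (mul_le_mul_of_nonneg_right (habs s hs) (sq_nonneg a))) Cl
      _ = ENNReal.ofReal (|t - t₀| * a^2) * Cl * volume (Set.uIoc t₀ t) :=
          setLIntegral_const _ _
      _ = ENNReal.ofReal (|t - t₀| * a^2) * Cl * ENNReal.ofReal |t - t₀| := by
          rw [Set.uIoc, Real.volume_Ioc, max_sub_min_eq_abs, abs_sub_comm]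
  -- put everything together
  rw [integral_norm_eq_lintegral_enorm hΔint.aestronglyMeasurable]
  refine ENNReal.toReal_le_of_le_ofReal (by positivity) ?_
  have e1 : ENNReal.ofReal (|t - t₀| * R^2) * ENNReal.ofReal C
      = ENNReal.ofReal ((|t - t₀| * R^2) * C) := (ENNReal.ofReal_mul (by positivity)).symm
  have e2 : ENNReal.ofReal ((|t - t₀| * R^2)*C) * ENNReal.ofReal |t - t₀|
      = ENNReal.ofReal ((|t - t₀| * R^2)*C*|t-t₀|) := (ENNReal.ofReal_mul (by positivity)).symm
  have e3 : ENNReal.ofReal (R^n) * ENNReal.ofReal ((|t - t₀| * R^2)*C*|t-t₀|)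
      = ENNReal.ofReal (R^n * ((|t - t₀| * R^2)*C*|t-t₀|)) := (ENNReal.ofReal_mul (by positivity)).symm
  calc (∫⁻ x, ‖Gfun ρ μ n t x - Gfun ρ μ n t₀ x - (t - t₀) • Gfun ρ μ (n+1) t₀ x‖₊ ∂volume)
      = ∫⁻ x, ‖∫ a, ((-a)^n : ℝ) • D a x ∂μ‖₊ ∂volume := lintegral_congr fun x => by rw [hΔ x]
    _ ≤ ∫⁻ x, ∫⁻ a, ‖((-a)^n : ℝ) • D a x‖₊ ∂μ ∂volume :=
        lintegral_mono fun x => enorm_integral_le_lintegral_enorm _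
    _ = ∫⁻ a, ∫⁻ x, ‖((-a)^n : ℝ) • D a x‖₊ ∂volume ∂μ :=
        lintegral_lintegral_swap (hDcont.measurable.nnnorm.coe_nnreal_ennreal.aemeasurable)
    _ ≤ ∫⁻ _, ENNReal.ofReal (R^n) * (ENNReal.ofReal (|t - t₀| * R^2) * Cl
          * ENNReal.ofReal |t - t₀|) ∂μ := by
        refine lintegral_mono_ae (haR.mono fun a ha => ?_)
        have step1 : (∫⁻ x, ‖((-a)^n : ℝ) • D a x‖₊ ∂volume)
            = (‖((-a)^n : ℝ)‖₊ : ℝ≥0∞) * ∫⁻ x, ‖D a x‖₊ ∂volume := by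
          simp_rw [nnnorm_smul, ENNReal.coe_mul]
          exact lintegral_const_mul' _ _ ENNReal.coe_ne_top
        rw [step1]
        have hb1 : (‖((-a)^n : ℝ)‖₊ : ℝ≥0∞) ≤ ENNReal.ofReal (R^n) := by
          rw [show ((‖((-a)^n : ℝ)‖₊ : ℝ≥0∞)) = ENNReal.ofReal |(-a)^n| from Real.enorm_eq_ofReal_abs _, abs_pow, abs_neg]
          exact ENNReal.ofReal_le_ofReal (pow_le_pow_left₀ (abs_nonneg a) ha n)
        have hb2 : ENNReal.ofReal (|t - t₀| * a^2) ≤ ENNReal.ofReal (|t - t₀| * R^2) := by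
          refine ENNReal.ofReal_le_ofReal (mul_le_mul_of_nonneg_left ?_ (abs_nonneg _))
          rw [← sq_abs a]
          exact pow_le_pow_left₀ (abs_nonneg a) ha 2
        exact mul_le_mul' hb1 ((hJa a).trans (mul_le_mul' (mul_le_mul' hb2 le_rfl) le_rfl))
    _ = ENNReal.ofReal (R^n) * (ENNReal.ofReal (|t - t₀| * R^2) * Cl
          * ENNReal.ofReal |t - t₀|) := by rw [lintegral_const, measure_univ, mul_one]
    _ ≤ ENNReal.ofReal ((R^(n+2) * C) * (t - t₀)^2) := by
        rw [← hClof, e1, e2, e3]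
        refine ENNReal.ofReal_le_ofReal (le_of_eq ?_)
        have habs2 : |t - t₀| * |t - t₀| = (t - t₀) * (t - t₀) := abs_mul_abs_self _
        rw [pow_add]
        linear_combination (R^n * R^2 * C) * habs2


/-- For a Schwartz density `ρ` and a compactly supported probability measure `μ`:
each `Gfun ρ μ n t` is integrable, the curve `t ↦ [Gfun ρ μ n t]` in `L¹` is
strongly differentiable with derivative `[Gfun ρ μ (n+1) t₀]`, and at `t = 0` it
is the `n`-th moment of `μ` times `(-1)^n` times the `n`-th derivative of `ρ`. -/
theorem stmt_8 (ρ : SchwartzMap ℝ ℂ) (μ : Measure ℝ) [IsProbabilityMeasure μ]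
    (hμ : ∃ K : Set ℝ, IsCompact K ∧ μ Kᶜ = 0) :
    ∃ hint : ∀ (n : ℕ) (t : ℝ), Integrable (Gfun ρ μ n t) volume,
      (∀ (n : ℕ) (t₀ : ℝ),
        HasDerivAt (fun t : ℝ => Integrable.toL1 (Gfun ρ μ n t) (hint n t))
          (Integrable.toL1 (Gfun ρ μ (n + 1) t₀) (hint (n + 1) t₀)) t₀) ∧
      (∀ (n : ℕ) (x : ℝ),
        Gfun ρ μ n 0 x
          = (∫ a, a ^ n ∂μ) • ((-1 : ℂ) ^ n • iteratedDeriv n (ρ : ℝ → ℂ) x)) := by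
  obtain ⟨K, hK, hKc⟩ := hμ
  obtain ⟨r, hr⟩ := hK.isBounded.subset_closedBall 0
  set R : ℝ := max r 0 with hRdef
  have hR0 : (0:ℝ) ≤ R := le_max_right _ _
  have hKR : ∀ a ∈ K, |a| ≤ R := by
    intro a ha
    have := hr ha
    rw [Metric.mem_closedBall, Real.dist_eq, sub_zero] at this
    exact this.trans (le_max_left _ _)
  refine ⟨fun n t => Gfun_integrable ρ μ hKc hKR hR0 n t, fun n t₀ => ?_, fun n x => Gfun_zero ρ μ n x⟩
  rw [hasDerivAt_iff_isLittleO]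
  set hint : ∀ (n : ℕ) (t : ℝ), Integrable (Gfun ρ μ n t) volume :=
    fun n t => Gfun_integrable ρ μ hKc hKR hR0 n t with hintdef
  set C : ℝ := ∫ y, ‖iteratedDeriv (n+2) (⇑ρ) y‖ with hCdef
  have big : (fun t : ℝ => Integrable.toL1 (Gfun ρ μ n t) (hint n t)
        - Integrable.toL1 (Gfun ρ μ n t₀) (hint n t₀)
        - (t - t₀) • Integrable.toL1 (Gfun ρ μ (n+1) t₀) (hint (n+1) t₀))
      =O[nhds t₀] fun t => (t - t₀)^2 := by
    apply Asymptotics.IsBigO.of_bound (R^(n+2) * C)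
    refine Filter.Eventually.of_forall fun t => ?_
    have hΔint : Integrable (fun x =>
        Gfun ρ μ n t x - Gfun ρ μ n t₀ x - (t - t₀) • Gfun ρ μ (n+1) t₀ x) volume :=
      ((hint n t).sub (hint n t₀)).sub ((hint (n+1) t₀).smul (t - t₀))
    have heq : Integrable.toL1 (Gfun ρ μ n t) (hint n t)
        - Integrable.toL1 (Gfun ρ μ n t₀) (hint n t₀)
        - (t - t₀) • Integrable.toL1 (Gfun ρ μ (n+1) t₀) (hint (n+1) t₀)
        = Integrable.toL1 _ hΔint := rfl
    rw [heq, L1.norm_of_fun_eq_integral_norm, Real.norm_eq_abs, abs_of_nonneg (sq_nonneg _)]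
    exact key_est ρ μ hKc hKR hR0 n t₀ t
  have small : (fun t : ℝ => (t - t₀)^2) =o[nhds t₀] fun t => t - t₀ := by
    have h0 : Filter.Tendsto (fun t : ℝ => t - t₀) (nhds t₀) (nhds 0) := by
      simpa using (continuous_id.tendsto t₀).sub_const t₀
    have h1 : (fun t : ℝ => t - t₀) =o[nhds t₀] fun _ => (1:ℝ) :=
      (Asymptotics.isLittleO_one_iff ℝ).mpr h0
    have h2 := h1.mul_isBigO (Asymptotics.isBigO_refl (fun t : ℝ => t - t₀) (nhds t₀))
    simpa [pow_two] using h2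
  exact big.trans_isLittleO small
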